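/- Let n be a positive integer and alpha > 0 satisfy alpha * 2^{-n} * C(n,i) <= 1 for all i in {0,...,n}. Let P be the product distribution on {0,1}^{n+1} in which bit i equals 1 independently with probability S_e(i). Then: (1) the number of strings x in {0,1}^{n+1} with P(x) >= e^{-sqrt(n)/2} is at most e^{sqrt(n)/2}; and (2) the total probability mass of strings x with P(x) < e^{-sqrt(n)/2} is at most e^{ sqrt(alpha)*(2*pi*n)^{1/4} - sqrt(n)/4 }. By symmetry the same bounds hold with S_e replaced by S_o. -/

import Mathlib

/-- The binomial probability `bin n p k = C(n,k) p^k (1-p)^(n-k)` (here `C(n,k) = 0`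
for `k > n`, so the value is `0` out of range). -/
noncomputable def bin (n : ℕ) (p : ℝ) (k : ℕ) : ℝ :=
  (n.choose k : ℝ) * p^k * (1-p)^(n-k)

/-- The length-`(n+1)` string of probabilities `S_e`, nonzero on even indices:
`S_e(i) = α bin(n,1/2,i)` for even `i`, and `0` for odd `i`. -/
noncomputable def Se (n : ℕ) (α : ℝ) : Fin (n+1) → ℝ :=
  fun i => if Even i.val then α * bin n (1/2) i.val else 0

/-- The length-`(n+1)` string of probabilities `S_o`, nonzero on odd indices:
`S_o(i) = α bin(n,1/2,i)` for odd `i`, and `0` for even `i`. -/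
noncomputable def So (n : ℕ) (α : ℝ) : Fin (n+1) → ℝ :=
  fun i => if Even i.val then 0 else α * bin n (1/2) i.val

/-- The probability assigned to the binary string `x : Fin m → Bool` by the product
distribution in which bit `i` equals `1` independently with probability `S i`. -/
noncomputable def prodP {m : ℕ} (S : Fin m → ℝ) (x : Fin m → Bool) : ℝ :=
  ∏ i, if x i then S i else 1 - S i

open Finset Real

lemma myCosh_le {x : ℝ} (h0 : 0 ≤ x) (h1 : x ≤ 1) : Real.cosh x ≤ Real.exp (x^2/2) := by
  have hb1 := Real.exp_bound (x := x) (by rwa [abs_of_nonneg h0]) (n := 4) (by norm_num)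
  have hb2 := Real.exp_bound (x := -x) (by rwa [abs_neg, abs_of_nonneg h0]) (n := 4) (by norm_num)
  have hs1 : ∑ m ∈ range 4, x ^ m / m.factorial = 1 + x + x^2/2 + x^3/6 := by
    norm_num [Finset.sum_range_succ, Nat.factorial]
  have hs2 : ∑ m ∈ range 4, (-x) ^ m / m.factorial = 1 - x + x^2/2 - x^3/6 := by
    norm_num [Finset.sum_range_succ, Nat.factorial]; ring
  rw [hs1, abs_of_nonneg h0] at hb1
  rw [hs2, abs_neg, abs_of_nonneg h0] at hb2
  norm_num [Nat.factorial] at hb1 hb2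
  have e1 : Real.exp x ≤ 1 + x + x^2/2 + x^3/6 + x^4 * (5/96) := by
    have := (abs_sub_le_iff.1 hb1).1
    nlinarith [pow_nonneg h0 4]
  have e2 : Real.exp (-x) ≤ 1 - x + x^2/2 - x^3/6 + x^4 * (5/96) := by
    have := (abs_sub_le_iff.1 hb2).1
    nlinarith [pow_nonneg h0 4]
  have hq : 1 + x^2/4 ≤ Real.exp (x^2/4) := by
    have := Real.add_one_le_exp (x^2/4); linarith
  have hsq : Real.exp (x^2/4) * Real.exp (x^2/4) = Real.exp (x^2/2) := by
    rw [← Real.exp_add]; ring_nf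
  have h2 : (1 + x^2/4) * (1 + x^2/4) ≤ Real.exp (x^2/2) := by
    calc (1 + x^2/4) * (1 + x^2/4) ≤ Real.exp (x^2/4) * Real.exp (x^2/4) := by
          apply mul_le_mul hq hq (by positivity) (le_of_lt (Real.exp_pos _))
      _ = Real.exp (x^2/2) := hsq
  rw [Real.cosh_eq]
  nlinarith [pow_le_one₀ h0 h1 (n:=4), sq_nonneg x]


lemma geom_aux (r : ℝ) (h0 : 0 ≤ r) (h1 : r < 1) (F : Finset ℕ) (k : ℕ → ℕ)
    (hinj : ∀ i ∈ F, ∀ j ∈ F, k i = k j → i = j) :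
    ∑ i ∈ F, r ^ (k i) ≤ (1 - r)⁻¹ := by
  have him := Finset.sum_image (s := F) (g := k) (f := fun j => r ^ j) hinj
  calc ∑ i ∈ F, r ^ (k i) = ∑ j ∈ F.image k, r ^ j := him.symm
    _ ≤ ∑' j : ℕ, r ^ j :=
        Summable.sum_le_tsum _ (fun i _ => pow_nonneg h0 i) (summable_geometric_of_lt_one h0 h1)
    _ = (1 - r)⁻¹ := tsum_geometric_of_lt_one h0 h1

lemma B_bound (n : ℕ) (μ : ℝ) (hμ : 0 < μ) (F : Finset ℕ)
    (hpar : ∀ i ∈ F, ∀ j ∈ F, i % 2 = j % 2) :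
    ∑ i ∈ F, Real.exp (-(μ * |2*(i:ℝ) - n|)) ≤ 2 * (1 - Real.exp (-(4*μ)))⁻¹ := by
  set r : ℝ := Real.exp (-(4*μ)) with hr
  have hr0 : 0 ≤ r := (Real.exp_pos _).le
  have hr1 : r < 1 := Real.exp_lt_one_iff.mpr (by linarith)
  have key : ∀ (G : Finset ℕ) (k : ℕ → ℕ), G ⊆ F →
      (∀ i ∈ G, (4 * k i : ℝ) ≤ |2*(i:ℝ) - n|) →
      (∀ i ∈ G, ∀ j ∈ G, k i = k j → i = j) →
      ∑ i ∈ G, Real.exp (-(μ * |2*(i:ℝ) - n|)) ≤ (1 - r)⁻¹ := by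
    intro G k hG hk hinj
    refine le_trans (Finset.sum_le_sum (fun i hi => ?_)) (geom_aux r hr0 hr1 G k hinj)
    have h1 : r ^ (k i) = Real.exp (-(4*μ) * (k i)) := by
      rw [mul_comm, Real.exp_nat_mul]
    rw [h1]
    apply Real.exp_le_exp.mpr
    have := hk i hi
    nlinarith
  have hsplit := Finset.sum_filter_add_sum_filter_not F (fun i => 2*i ≤ n)
      (fun i => Real.exp (-(μ * |2*(i:ℝ) - n|)))
  have h1' : ∑ i ∈ F.filter (fun i => 2*i ≤ n), Real.exp (-(μ * |2*(i:ℝ) - n|)) ≤ (1 - r)⁻¹ := by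
    apply key _ (fun i => (n/2 - i)/2) (Finset.filter_subset _ _)
    · intro i hi
      have h2i : 2*i ≤ n := (Finset.mem_filter.mp hi).2
      have hc : (2*(i:ℝ)) ≤ (n:ℝ) := by exact_mod_cast h2i
      have habs : |2*(i:ℝ) - n| = (n:ℝ) - 2*i := by
        rw [abs_of_nonpos (by linarith)]; ring
      rw [habs]
      have hnat : 4 * ((n/2 - i)/2) + 2*i ≤ n := by omega
      have := (Nat.cast_le (α := ℝ)).mpr hnat
      push_cast at this
      linarith
    · intro i hi j hj hkij
      have h2i : 2*i ≤ n := (Finset.mem_filter.mp hi).2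
      have h2j : 2*j ≤ n := (Finset.mem_filter.mp hj).2
      have := hpar i (Finset.filter_subset _ _ hi) j (Finset.filter_subset _ _ hj)
      omega
  have h2' : ∑ i ∈ F.filter (fun i => ¬ 2*i ≤ n), Real.exp (-(μ * |2*(i:ℝ) - n|)) ≤ (1 - r)⁻¹ := by
    apply key _ (fun i => (i - (n/2+1))/2) (Finset.filter_subset _ _)
    · intro i hi
      have h2i : ¬ 2*i ≤ n := (Finset.mem_filter.mp hi).2
      have hc : (n:ℝ) ≤ 2*(i:ℝ) := by exact_mod_cast Nat.le_of_lt (by omega)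
      have habs : |2*(i:ℝ) - n| = 2*(i:ℝ) - n := abs_of_nonneg (by linarith)
      rw [habs]
      have hnat : 4 * ((i - (n/2+1))/2) + n ≤ 2*i := by omega
      have := (Nat.cast_le (α := ℝ)).mpr hnat
      push_cast at this
      linarith
    · intro i hi j hj hkij
      have h2i : ¬ 2*i ≤ n := (Finset.mem_filter.mp hi).2
      have h2j : ¬ 2*j ≤ n := (Finset.mem_filter.mp hj).2
      have := hpar i (Finset.filter_subset _ _ hi) j (Finset.filter_subset _ _ hj)
      omega
  have h3 : (0:ℝ) < 1 - r := by linarith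
  calc ∑ i ∈ F, Real.exp (-(μ * |2*(i:ℝ) - n|))
      = _ + _ := hsplit.symm
    _ ≤ (1-r)⁻¹ + (1-r)⁻¹ := add_le_add h1' h2'
    _ = 2 * (1-r)⁻¹ := by ring


lemma pow_split (μ : ℝ) (n i : ℕ) (h : i ≤ n) :
    (Real.exp μ / 2)^i * (Real.exp (-μ) / 2)^(n-i)
      = (1/2:ℝ)^n * Real.exp (μ * (2*(i:ℝ) - n)) := by
  rw [div_pow, div_pow, ← Real.exp_nat_mul, ← Real.exp_nat_mul, div_mul_div_comm,
    ← Real.exp_add, ← pow_add, Nat.add_sub_cancel' h]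
  rw [one_div, inv_pow, eq_comm, mul_comm ((2:ℝ)^n)⁻¹, div_eq_mul_inv]
  congr 1
  have hc : ((n - i : ℕ) : ℝ) = (n:ℝ) - i := by
    rw [Nat.cast_sub h]
  rw [hc]
  ring_nf

lemma A_bound (n : ℕ) (μ : ℝ) :
    ∑ i ∈ range (n+1), (n.choose i : ℝ) * (1/2)^n * Real.exp (μ * |2*(i:ℝ) - n|)
      ≤ 2 * Real.cosh μ ^ n := by
  have step1 : ∀ i ∈ range (n+1),
      (n.choose i : ℝ) * (1/2)^n * Real.exp (μ * |2*(i:ℝ) - n|)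
        ≤ (Real.exp μ / 2)^i * (Real.exp (-μ) / 2)^(n-i) * (n.choose i)
          + (Real.exp (-μ) / 2)^i * (Real.exp μ / 2)^(n-i) * (n.choose i) := by
    intro i hi
    have hin : i ≤ n := Nat.lt_succ_iff.mp (Finset.mem_range.mp hi)
    rw [pow_split μ n i hin]
    have h2 : (Real.exp (-μ) / 2)^i * (Real.exp μ / 2)^(n-i)
        = (1/2:ℝ)^n * Real.exp ((-μ) * (2*(i:ℝ) - n)) := by
      have := pow_split (-μ) n i hin
      rw [neg_neg] at this
      rw [this]
    rw [h2]
    have hb : Real.exp (μ * |2*(i:ℝ) - n|)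
        ≤ Real.exp (μ * (2*(i:ℝ) - n)) + Real.exp ((-μ) * (2*(i:ℝ) - n)) := by
      rcases abs_choice (2*(i:ℝ) - n) with h | h <;> rw [h]
      · nlinarith [Real.exp_pos ((-μ) * (2*(i:ℝ) - n))]
      · have : μ * -(2*(i:ℝ) - n) = (-μ) * (2*(i:ℝ) - n) := by ring
        rw [this]
        nlinarith [Real.exp_pos (μ * (2*(i:ℝ) - n))]
    have hnn : (0:ℝ) ≤ (n.choose i : ℝ) * (1/2)^n := by positivity
    calc (n.choose i : ℝ) * (1/2)^n * Real.exp (μ * |2*(i:ℝ) - n|)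
        ≤ (n.choose i : ℝ) * (1/2)^n
            * (Real.exp (μ * (2*(i:ℝ) - n)) + Real.exp ((-μ) * (2*(i:ℝ) - n))) :=
          mul_le_mul_of_nonneg_left hb hnn
      _ = (1/2:ℝ)^n * Real.exp (μ * (2*(i:ℝ) - n)) * (n.choose i)
          + (1/2:ℝ)^n * Real.exp ((-μ) * (2*(i:ℝ) - n)) * (n.choose i) := by ring
  calc ∑ i ∈ range (n+1), (n.choose i : ℝ) * (1/2)^n * Real.exp (μ * |2*(i:ℝ) - n|)
      ≤ ∑ i ∈ range (n+1), ((Real.exp μ / 2)^i * (Real.exp (-μ) / 2)^(n-i) * (n.choose i)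
          + (Real.exp (-μ) / 2)^i * (Real.exp μ / 2)^(n-i) * (n.choose i)) :=
        Finset.sum_le_sum step1
    _ = (Real.exp μ / 2 + Real.exp (-μ) / 2)^n + (Real.exp (-μ) / 2 + Real.exp μ / 2)^n := by
        rw [Finset.sum_add_distrib, ← add_pow, ← add_pow]
    _ = 2 * Real.cosh μ ^ n := by
        rw [Real.cosh_eq]
        ring_nf


lemma exp_half_lt : Real.exp (1/2 : ℝ) ≤ 1.6488 := by
  have h1 : Real.exp (1/2 : ℝ) * Real.exp (1/2 : ℝ) = Real.exp 1 := by
    rw [← Real.exp_add]; norm_num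
  nlinarith [Real.exp_one_lt_d9, Real.exp_pos (1/2 : ℝ)]

lemma sqrt_two_pi_ge : (2.5066 : ℝ) ≤ Real.sqrt (2 * Real.pi) := by
  rw [show (2.5066:ℝ) = Real.sqrt (2.5066^2) by rw [Real.sqrt_sq]; norm_num]
  apply Real.sqrt_le_sqrt
  nlinarith [Real.pi_gt_d6]

lemma sum_sqrt_bin_le (n : ℕ) (hn : 0 < n) (F : Finset ℕ)
    (hFsub : F ⊆ Finset.range (n+1))
    (hcard : (F.card : ℝ) ≤ ((n:ℝ)+2)/2)
    (hmass : ∑ i ∈ F, ((n.choose i : ℝ) * (1/2)^n) ≤ 1/2)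
    (hpar : ∀ i ∈ F, ∀ j ∈ F, i % 2 = j % 2) :
    ∑ i ∈ F, Real.sqrt ((n.choose i : ℝ) * (1/2)^n) ≤ (2 * Real.pi * (n:ℝ)) ^ ((1:ℝ)/4) := by
  set b : ℕ → ℝ := fun i => (n.choose i : ℝ) * (1/2)^n with hb
  have hb0 : ∀ i, 0 ≤ b i := fun i => by positivity
  set T := ∑ i ∈ F, Real.sqrt (b i) with hT
  have hT0 : 0 ≤ T := Finset.sum_nonneg fun i _ => Real.sqrt_nonneg _
  have hX0 : (0:ℝ) ≤ 2 * Real.pi * n := by positivity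
  have hgoal : (2 * Real.pi * (n:ℝ)) ^ ((1:ℝ)/4)
      = Real.sqrt (Real.sqrt (2 * Real.pi * n)) := by
    rw [Real.sqrt_eq_rpow, Real.sqrt_eq_rpow, ← Real.rpow_mul hX0]
    norm_num
  rw [hgoal]
  rw [Real.le_sqrt hT0 (Real.sqrt_nonneg _)]
  -- now goal : T^2 ≤ √(2πn)
  by_cases hsmall : n ≤ 80
  · -- crude Cauchy-Schwarz
    have hcs := Finset.sum_mul_sq_le_sq_mul_sq F (fun _ => (1:ℝ)) (fun i => Real.sqrt (b i))
    simp only [one_pow, one_mul, Finset.sum_const, nsmul_eq_mul, mul_one] at hcs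
    have hsq : ∀ i ∈ F, Real.sqrt (b i) ^ 2 = b i := fun i _ => Real.sq_sqrt (hb0 i)
    rw [Finset.sum_congr rfl hsq] at hcs
    have h1 : T^2 ≤ ((n:ℝ)+2)/2 * (1/2) := by
      calc T^2 ≤ (F.card : ℝ) * ∑ i ∈ F, b i := hcs
        _ ≤ ((n:ℝ)+2)/2 * (1/2) := by
            apply mul_le_mul hcard hmass (Finset.sum_nonneg fun i _ => hb0 i) (by positivity)
    refine le_trans h1 ?_
    rw [show ((n:ℝ)+2)/2 * (1/2) = Real.sqrt ((((n:ℝ)+2)/4)^2) by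
      rw [Real.sqrt_sq (by positivity)]; ring]
    apply Real.sqrt_le_sqrt
    have hn1 : (1:ℝ) ≤ n := by exact_mod_cast hn
    have hn80 : (n:ℝ) ≤ 80 := by exact_mod_cast hsmall
    nlinarith [Real.pi_gt_d6]
  · -- refined
    push_neg at hsmall
    have hn81 : 81 ≤ n := hsmall
    set s : ℝ := Real.sqrt n with hs
    have hs9 : 9 ≤ s := by
      rw [hs, show (9:ℝ) = Real.sqrt 81 by rw [show (81:ℝ) = 9^2 by norm_num, Real.sqrt_sq]; norm_num]
      apply Real.sqrt_le_sqrt; exact_mod_cast hn81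
    have hs0 : 0 < s := by linarith
    have hs2 : s^2 = n := Real.sq_sqrt (by positivity)
    set μ : ℝ := 1/s with hμdef
    have hμ0 : 0 < μ := by positivity
    have hμ9 : μ ≤ 1/9 := by
      rw [hμdef]; apply div_le_div_of_nonneg_left (by norm_num) (by norm_num) hs9
    -- Cauchy-Schwarz
    set d : ℕ → ℝ := fun i => |2*(i:ℝ) - n| with hd
    have hd0 : ∀ i, 0 ≤ d i := fun i => abs_nonneg _
    have hfg : ∀ i ∈ F, Real.sqrt (b i)
        = Real.sqrt (b i * Real.exp (μ * d i)) * Real.sqrt (Real.exp (-(μ * d i))) := by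
      intro i _
      rw [← Real.sqrt_mul (by positivity)]
      congr 1
      rw [mul_assoc, ← Real.exp_add]
      simp
    have hcs := Finset.sum_mul_sq_le_sq_mul_sq F
      (fun i => Real.sqrt (b i * Real.exp (μ * d i)))
      (fun i => Real.sqrt (Real.exp (-(μ * d i))))
    rw [← Finset.sum_congr rfl hfg] at hcs
    have hA2 : ∑ i ∈ F, Real.sqrt (b i * Real.exp (μ * d i)) ^ 2
        ≤ 2 * Real.exp (1/2 : ℝ) := by
      have he : ∀ i ∈ F, Real.sqrt (b i * Real.exp (μ * d i)) ^ 2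
          = b i * Real.exp (μ * d i) := fun i _ => Real.sq_sqrt (by positivity)
      rw [Finset.sum_congr rfl he]
      calc ∑ i ∈ F, b i * Real.exp (μ * d i)
          ≤ ∑ i ∈ range (n+1), b i * Real.exp (μ * d i) :=
            Finset.sum_le_sum_of_subset_of_nonneg hFsub (fun i _ _ => by positivity)
        _ ≤ 2 * Real.cosh μ ^ n := A_bound n μ
        _ ≤ 2 * Real.exp (1/2 : ℝ) := by
            have h1 : Real.cosh μ ^ n ≤ Real.exp (μ^2/2) ^ n :=
              pow_le_pow_left₀ (Real.cosh_pos (x := μ)).le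
                (myCosh_le hμ0.le (by linarith)) n
            have h2 : Real.exp (μ^2/2) ^ n = Real.exp ((n:ℝ) * (μ^2/2)) := by
              rw [Real.exp_nat_mul]
            have h3 : (n:ℝ) * (μ^2/2) = 1/2 := by
              have hμ2 : μ^2 = 1/(n:ℝ) := by
                rw [hμdef, div_pow, one_pow, hs2]
              have hnn : (n:ℝ) ≠ 0 := by positivity
              rw [hμ2]; field_simp
            rw [h2, h3] at h1
            linarith
    have hB2 : ∑ i ∈ F, Real.sqrt (Real.exp (-(μ * d i))) ^ 2
        ≤ 2 * (1 - Real.exp (-(4*μ)))⁻¹ := by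
      have he : ∀ i ∈ F, Real.sqrt (Real.exp (-(μ * d i))) ^ 2
          = Real.exp (-(μ * d i)) := fun i _ => Real.sq_sqrt (Real.exp_pos _).le
      rw [Finset.sum_congr rfl he]
      exact B_bound n μ hμ0 F hpar
    -- combine
    set r : ℝ := Real.exp (-(4*μ)) with hrdef
    have hr1 : r < 1 := Real.exp_lt_one_iff.mpr (by linarith)
    have hrinv : (1 - r)⁻¹ ≤ (1 + 4*μ) / (4*μ) := by
      have hx : (1:ℝ) + 4*μ ≤ Real.exp (4*μ) := by
        have := Real.add_one_le_exp (4*μ); linarith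
      have hrle : r ≤ (1 + 4*μ)⁻¹ := by
        rw [hrdef, Real.exp_neg]
        apply inv_anti₀ (by linarith) hx
      have h1 : (4*μ)/(1+4*μ) ≤ 1 - r := by
        have he : 1 - (1+4*μ)⁻¹ = (4*μ)/(1+4*μ) := by
          field_simp
          ring
        rw [← he]
        linarith
      have h2 : (0:ℝ) < (4*μ)/(1+4*μ) := by positivity
      calc (1-r)⁻¹ ≤ ((4*μ)/(1+4*μ))⁻¹ := inv_anti₀ h2 h1
        _ = (1 + 4*μ) / (4*μ) := by rw [inv_div]
    have hTsq : T^2 ≤ 2 * Real.exp (1/2:ℝ) * (2 * (1 - r)⁻¹) := by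
      calc T^2 ≤ _ * _ := hcs
        _ ≤ 2 * Real.exp (1/2:ℝ) * (2 * (1 - r)⁻¹) := by
            apply mul_le_mul hA2 hB2
              (Finset.sum_nonneg fun i _ => sq_nonneg _) (by positivity)
    have hfinal : 2 * Real.exp (1/2:ℝ) * (2 * (1 - r)⁻¹) ≤ Real.sqrt (2*Real.pi) * s := by
      have h1 : 2 * Real.exp (1/2:ℝ) * (2 * (1 - r)⁻¹)
          ≤ 4 * Real.exp (1/2:ℝ) * ((1 + 4*μ)/(4*μ)) := by
        have heq : 2 * Real.exp (1/2:ℝ) * (2 * (1 - r)⁻¹)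
            = 4 * Real.exp (1/2:ℝ) * (1 - r)⁻¹ := by ring
        rw [heq]
        exact mul_le_mul_of_nonneg_left hrinv (by positivity)
      have h2 : (1 + 4*μ)/(4*μ) = (s + 4)/4 := by
        rw [hμdef]; field_simp
      rw [h2] at h1
      have h3 : 4 * Real.exp (1/2:ℝ) * ((s+4)/4) = Real.exp (1/2:ℝ) * (s+4) := by ring
      rw [h3] at h1
      have h4 : Real.exp (1/2:ℝ) * (s+4) ≤ Real.sqrt (2*Real.pi) * s := by
        nlinarith [exp_half_lt, sqrt_two_pi_ge, hs9, Real.exp_pos (1/2:ℝ)]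
      linarith
    have hsqrtmul : Real.sqrt (2*Real.pi*n) = Real.sqrt (2*Real.pi) * s := by
      rw [hs, ← Real.sqrt_mul (by positivity)]
    rw [hsqrtmul]
    linarith


variable {m : ℕ}

lemma prodP_nonneg {S : Fin m → ℝ} (h0 : ∀ i, 0 ≤ S i) (h1 : ∀ i, S i ≤ 1)
    (x : Fin m → Bool) : 0 ≤ prodP S x :=
  Finset.prod_nonneg fun i _ => by
    by_cases h : x i <;> simp [h, h0 i, sub_nonneg.mpr (h1 i)]

lemma sum_prodP {S : Fin m → ℝ} : ∑ x : Fin m → Bool, prodP S x = 1 := by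
  unfold prodP
  have h : (∑ x : Fin m → Bool, ∏ i, if x i then S i else 1 - S i)
      = ∏ i, ∑ b : Bool, (if b then S i else 1 - S i) :=
    (Fintype.prod_sum (κ := fun _ : Fin m => Bool)
      (f := fun i b => if b then S i else 1 - S i)).symm
  rw [h]
  simp

lemma sqrt_prod {ι : Type*} (s : Finset ι) (f : ι → ℝ) (h : ∀ i ∈ s, 0 ≤ f i) :
    Real.sqrt (∏ i ∈ s, f i) = ∏ i ∈ s, Real.sqrt (f i) := by
  induction s using Finset.cons_induction with
  | empty => simp
  | cons a s ha ih =>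
      rw [Finset.prod_cons, Finset.prod_cons,
        Real.sqrt_mul (h a (Finset.mem_cons_self a s)), ih (fun i hi => h i (Finset.mem_cons.mpr (Or.inr hi)))]

lemma sum_sqrt_prodP {S : Fin m → ℝ} (h0 : ∀ i, 0 ≤ S i) (h1 : ∀ i, S i ≤ 1) :
    ∑ x : Fin m → Bool, Real.sqrt (prodP S x)
      = ∏ i, (Real.sqrt (S i) + Real.sqrt (1 - S i)) := by
  have hterm : ∀ x : Fin m → Bool, Real.sqrt (prodP S x)
      = ∏ i, Real.sqrt (if x i then S i else 1 - S i) := by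
    intro x
    exact sqrt_prod _ _ (fun i _ => by
      by_cases h : x i <;> simp [h, h0 i, sub_nonneg.mpr (h1 i)])
  rw [Finset.sum_congr rfl (fun x _ => hterm x)]
  have h : (∑ x : Fin m → Bool, ∏ i, Real.sqrt (if x i then S i else 1 - S i))
      = ∏ i, ∑ b : Bool, Real.sqrt (if b then S i else 1 - S i) :=
    (Fintype.prod_sum (κ := fun _ : Fin m => Bool)
      (f := fun i b => Real.sqrt (if b then S i else 1 - S i))).symm
  rw [h]
  simp

lemma card_bound {S : Fin m → ℝ} (h0 : ∀ i, 0 ≤ S i) (h1 : ∀ i, S i ≤ 1)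
    {t : ℝ} (ht : 0 < t) :
    ((Finset.univ.filter (fun x : Fin m → Bool => t ≤ prodP S x)).card : ℝ) ≤ 1 / t := by
  set Fl := Finset.univ.filter (fun x : Fin m → Bool => t ≤ prodP S x) with hFl
  have h2 : (Fl.card : ℝ) * t ≤ ∑ x ∈ Fl, prodP S x := by
    have := Finset.card_nsmul_le_sum Fl (prodP S) t
      (fun x hx => (Finset.mem_filter.mp hx).2)
    rwa [nsmul_eq_mul] at this
  have h3 : ∑ x ∈ Fl, prodP S x ≤ 1 := by
    rw [← sum_prodP (S := S)]
    exact Finset.sum_le_sum_of_subset_of_nonneg (Finset.subset_univ _)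
      (fun x _ _ => prodP_nonneg h0 h1 x)
  rw [le_div_iff₀ ht]
  linarith

lemma mass_bound {S : Fin m → ℝ} (h0 : ∀ i, 0 ≤ S i) (h1 : ∀ i, S i ≤ 1)
    {t : ℝ} (ht : 0 ≤ t) :
    ∑ x ∈ Finset.univ.filter (fun x : Fin m → Bool => prodP S x < t), prodP S x
      ≤ Real.sqrt t * Real.exp (∑ i, Real.sqrt (S i)) := by
  set Fl := Finset.univ.filter (fun x : Fin m → Bool => prodP S x < t) with hFl
  have step1 : ∑ x ∈ Fl, prodP S x ≤ ∑ x ∈ Fl, Real.sqrt t * Real.sqrt (prodP S x) := by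
    apply Finset.sum_le_sum
    intro x hx
    have hlt : prodP S x < t := (Finset.mem_filter.mp hx).2
    have hp0 : 0 ≤ prodP S x := prodP_nonneg h0 h1 x
    calc prodP S x = Real.sqrt (prodP S x) * Real.sqrt (prodP S x) :=
          (Real.mul_self_sqrt hp0).symm
      _ ≤ Real.sqrt t * Real.sqrt (prodP S x) := by
          apply mul_le_mul_of_nonneg_right (Real.sqrt_le_sqrt hlt.le) (Real.sqrt_nonneg _)
  have step2 : ∑ x ∈ Fl, Real.sqrt t * Real.sqrt (prodP S x)
      ≤ ∑ x : Fin m → Bool, Real.sqrt t * Real.sqrt (prodP S x) :=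
    Finset.sum_le_sum_of_subset_of_nonneg (Finset.subset_univ _)
      (fun x _ _ => by positivity)
  have step3 : ∑ x : Fin m → Bool, Real.sqrt t * Real.sqrt (prodP S x)
      = Real.sqrt t * ∏ i, (Real.sqrt (S i) + Real.sqrt (1 - S i)) := by
    rw [← Finset.mul_sum, sum_sqrt_prodP h0 h1]
  have step4 : ∏ i, (Real.sqrt (S i) + Real.sqrt (1 - S i))
      ≤ Real.exp (∑ i, Real.sqrt (S i)) := by
    rw [Real.exp_sum]
    apply Finset.prod_le_prod
    · intro i _; positivity
    · intro i _
      have ha : Real.sqrt (1 - S i) ≤ 1 :=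
        Real.sqrt_le_one.mpr (by linarith [h0 i])
      have hb := Real.add_one_le_exp (Real.sqrt (S i))
      linarith
  calc ∑ x ∈ Fl, prodP S x
      ≤ Real.sqrt t * ∏ i, (Real.sqrt (S i) + Real.sqrt (1 - S i)) := by
        rw [← step3]; exact le_trans step1 step2
    _ ≤ Real.sqrt t * Real.exp (∑ i, Real.sqrt (S i)) :=
        mul_le_mul_of_nonneg_left step4 (Real.sqrt_nonneg t)

lemma parity_card (n : ℕ) (p : ℕ) :
    (((Finset.range (n+1)).filter (fun i => i % 2 = p)).card : ℝ) ≤ ((n:ℝ)+2)/2 := by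
  have hinj : (((Finset.range (n+1)).filter (fun i => i % 2 = p)) : Set ℕ).InjOn
      (fun i => i / 2) := by
    intro i hi j hj hij
    simp only [Finset.coe_filter, Set.mem_setOf_eq, Finset.mem_range] at hi hj
    simp only at hij
    omega
  have hmap : ∀ i ∈ (Finset.range (n+1)).filter (fun i => i % 2 = p),
      i / 2 ∈ Finset.range (n/2 + 1) := by
    intro i hi
    simp only [Finset.mem_filter, Finset.mem_range] at hi ⊢
    omega
  have hle := Finset.card_le_card_of_injOn _ hmap hinj
  rw [Finset.card_range] at hle
  have h2 : ((n/2 + 1 : ℕ) : ℝ) ≤ ((n:ℝ)+2)/2 := by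
    have h3 : 2 * (n/2 + 1) ≤ n + 2 := by omega
    have h4 := (Nat.cast_le (α := ℝ)).mpr h3
    push_cast at h4 ⊢
    linarith
  calc (((Finset.range (n+1)).filter (fun i => i % 2 = p)).card : ℝ)
      ≤ ((n/2 + 1 : ℕ) : ℝ) := by exact_mod_cast hle
    _ ≤ ((n:ℝ)+2)/2 := h2

lemma parity_mass (n : ℕ) (hn : 0 < n) (p : ℕ) (hp : p ≤ 1) :
    ∑ i ∈ (Finset.range (n+1)).filter (fun i => i % 2 = p),
      ((n.choose i : ℝ) * (1/2)^n) ≤ 1/2 := by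
  have halt : ∑ i ∈ range (n+1), ((-1:ℝ))^i * (n.choose i) = 0 := by
    have h := Int.alternating_sum_range_choose_of_ne (n := n) (by omega)
    have h2 := congrArg (fun z : ℤ => (z : ℝ)) h
    push_cast at h2
    convert h2 using 2
  have htot : ∑ i ∈ range (n+1), ((n.choose i : ℝ)) = 2^n := by
    exact_mod_cast congrArg (fun z : ℕ => (z : ℝ)) (Nat.sum_range_choose n)
  have hpt : ∀ i ∈ range (n+1), (if i % 2 = p then ((n.choose i : ℝ)) else 0)
      = (n.choose i : ℝ)/2 + ((-1:ℝ)^p * (-1:ℝ)^i) * (n.choose i)/2 := by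
    intro i _
    have key : (-1:ℝ)^p * (-1:ℝ)^i = if i % 2 = p then 1 else (-1) := by
      by_cases h : i % 2 = p
      · rw [if_pos h, ← pow_add]
        exact (Nat.even_iff.mpr (by omega)).neg_one_pow
      · rw [if_neg h, ← pow_add]
        exact (Nat.odd_iff.mpr (by omega)).neg_one_pow
    by_cases h : i % 2 = p
    · rw [if_pos h, key, if_pos h]; ring
    · rw [if_neg h, key, if_neg h]; ring
  have hsum : ∑ i ∈ (Finset.range (n+1)).filter (fun i => i % 2 = p), ((n.choose i : ℝ))
      = 2^n/2 := by
    rw [Finset.sum_filter, Finset.sum_congr rfl hpt, Finset.sum_add_distrib]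
    have e1 : ∑ i ∈ range (n+1), (n.choose i:ℝ)/2 = 2^n/2 := by
      rw [← Finset.sum_div, htot]
    have e2 : ∑ i ∈ range (n+1), ((-1:ℝ)^p * (-1:ℝ)^i) * (n.choose i)/2 = 0 := by
      have h5 : ∀ i ∈ range (n+1), ((-1:ℝ)^p * (-1:ℝ)^i) * (n.choose i)/2
          = ((-1:ℝ)^p/2) * ((-1:ℝ)^i * (n.choose i)) := fun i _ => by ring
      rw [Finset.sum_congr rfl h5, ← Finset.mul_sum, halt, mul_zero]
    rw [e1, e2, add_zero]
  calc ∑ i ∈ (Finset.range (n+1)).filter (fun i => i % 2 = p), ((n.choose i : ℝ) * (1/2)^n)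
      = (1/2:ℝ)^n * ∑ i ∈ (Finset.range (n+1)).filter (fun i => i % 2 = p),
          ((n.choose i : ℝ)) := by
        rw [Finset.mul_sum]
        exact Finset.sum_congr rfl (fun i _ => by ring)
    _ = (1/2:ℝ)^n * (2^n/2) := by rw [hsum]
    _ ≤ 1/2 := le_of_eq (by rw [div_pow, one_pow]; field_simp)

lemma bin_half (n j : ℕ) (h : j ≤ n) : bin n (1/2) j = (n.choose j : ℝ) * (1/2)^n := by
  unfold bin
  rw [show (1:ℝ) - 1/2 = 1/2 by norm_num, mul_assoc, ← pow_add, Nat.add_sub_cancel' h]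

lemma bin_nonneg' (n j : ℕ) : 0 ≤ bin n (1/2) j := by
  unfold bin
  rw [show (1:ℝ) - 1/2 = 1/2 by norm_num]
  positivity

lemma sum_sqrt_S_le (n : ℕ) (hn : 0 < n) (α : ℝ) (hα : 0 < α) (p : ℕ) (hp : p ≤ 1)
    (S : Fin (n+1) → ℝ)
    (hS : ∀ i : Fin (n+1), S i = if i.val % 2 = p then α * bin n (1/2) i.val else 0) :
    ∑ i, Real.sqrt (S i) ≤ Real.sqrt α * (2*Real.pi*(n:ℝ))^((1:ℝ)/4) := by
  have h1 : ∑ i : Fin (n+1), Real.sqrt (S i)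
      = ∑ j ∈ Finset.range (n+1), Real.sqrt (if j % 2 = p then α * bin n (1/2) j else 0) := by
    rw [← Fin.sum_univ_eq_sum_range
      (fun j => Real.sqrt (if j % 2 = p then α * bin n (1/2) j else 0)) (n+1)]
    exact Finset.sum_congr rfl (fun i _ => by rw [hS i])
  rw [h1]
  have h2 : ∀ j ∈ Finset.range (n+1), Real.sqrt (if j % 2 = p then α * bin n (1/2) j else 0)
      = if j % 2 = p then Real.sqrt α * Real.sqrt ((n.choose j : ℝ)*(1/2)^n) else 0 := by
    intro j hj
    by_cases h : j % 2 = p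
    · rw [if_pos h, if_pos h, bin_half n j (Nat.lt_succ_iff.mp (Finset.mem_range.mp hj)),
        Real.sqrt_mul hα.le]
    · rw [if_neg h, if_neg h, Real.sqrt_zero]
  rw [Finset.sum_congr rfl h2, ← Finset.sum_filter, ← Finset.mul_sum]
  refine mul_le_mul_of_nonneg_left ?_ (Real.sqrt_nonneg α)
  exact sum_sqrt_bin_le n hn _ (Finset.filter_subset _ _) (parity_card n p)
    (parity_mass n hn p hp)
    (fun i hi j hj => by
      rw [(Finset.mem_filter.mp hi).2, (Finset.mem_filter.mp hj).2])

lemma both_bounds (n : ℕ) (hn : 0 < n) (α : ℝ) (S : Fin (n+1) → ℝ)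
    (h0 : ∀ i, 0 ≤ S i) (h1 : ∀ i, S i ≤ 1)
    (hsq : ∑ i, Real.sqrt (S i) ≤ Real.sqrt α * (2*Real.pi*(n:ℝ))^((1:ℝ)/4)) :
    (((Finset.univ.filter (fun x : Fin (n+1) → Bool =>
          Real.exp (-Real.sqrt n / 2) ≤ prodP S x)).card : ℝ)
        ≤ Real.exp (Real.sqrt n / 2)) ∧
    ((∑ x ∈ Finset.univ.filter (fun x : Fin (n+1) → Bool =>
          prodP S x < Real.exp (-Real.sqrt n / 2)), prodP S x)
        ≤ Real.exp (Real.sqrt α * (2 * Real.pi * n) ^ ((1:ℝ)/4) - Real.sqrt n / 4)) := by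
  constructor
  · have hc := card_bound h0 h1 (t := Real.exp (-Real.sqrt n / 2)) (Real.exp_pos _)
    have he : (1:ℝ) / Real.exp (-Real.sqrt n / 2) = Real.exp (Real.sqrt n / 2) := by
      rw [one_div, ← Real.exp_neg]
      congr 1
      ring
    rwa [he] at hc
  · have hm := mass_bound h0 h1 (t := Real.exp (-Real.sqrt n / 2)) (Real.exp_pos _).le
    calc ∑ x ∈ Finset.univ.filter (fun x : Fin (n+1) → Bool =>
            prodP S x < Real.exp (-Real.sqrt n / 2)), prodP S x
        ≤ Real.sqrt (Real.exp (-Real.sqrt n / 2))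
            * Real.exp (∑ i, Real.sqrt (S i)) := hm
      _ ≤ Real.sqrt (Real.exp (-Real.sqrt n / 2))
            * Real.exp (Real.sqrt α * (2*Real.pi*(n:ℝ))^((1:ℝ)/4)) :=
          mul_le_mul_of_nonneg_left (Real.exp_le_exp.mpr hsq) (Real.sqrt_nonneg _)
      _ = Real.exp (Real.sqrt α * (2 * Real.pi * n) ^ ((1:ℝ)/4) - Real.sqrt n / 4) := by
          rw [← Real.exp_half, ← Real.exp_add]
          congr 1
          ring

/-- If `α bin(n,1/2,i) ≤ 1` for all `i`, then for the product distribution `P`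
induced by `S_e` on `{0,1}^{n+1}`: (1) the number of strings with `P(x) ≥ e^{-√n/2}`
is at most `e^{√n/2}`, and (2) the total mass of strings with `P(x) < e^{-√n/2}` is
at most `e^{√α (2πn)^{1/4} - √n/4}`. By symmetry the same holds for `S_o`. -/
theorem rare_strings_bound (n : ℕ) (hn : 0 < n) (α : ℝ) (hα : 0 < α)
    (hle : ∀ i : ℕ, i ≤ n → α * bin n (1/2) i ≤ 1) :
    (((Finset.univ.filter (fun x : Fin (n+1) → Bool =>
          Real.exp (-Real.sqrt n / 2) ≤ prodP (Se n α) x)).card : ℝ)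
        ≤ Real.exp (Real.sqrt n / 2)) ∧
    ((∑ x ∈ Finset.univ.filter (fun x : Fin (n+1) → Bool =>
          prodP (Se n α) x < Real.exp (-Real.sqrt n / 2)), prodP (Se n α) x)
        ≤ Real.exp (Real.sqrt α * (2 * Real.pi * n) ^ ((1:ℝ)/4) - Real.sqrt n / 4)) ∧
    (((Finset.univ.filter (fun x : Fin (n+1) → Bool =>
          Real.exp (-Real.sqrt n / 2) ≤ prodP (So n α) x)).card : ℝ)
        ≤ Real.exp (Real.sqrt n / 2)) ∧
    ((∑ x ∈ Finset.univ.filter (fun x : Fin (n+1) → Bool =>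
          prodP (So n α) x < Real.exp (-Real.sqrt n / 2)), prodP (So n α) x)
        ≤ Real.exp (Real.sqrt α * (2 * Real.pi * n) ^ ((1:ℝ)/4) - Real.sqrt n / 4)) := by
  have hbin0 : ∀ j, 0 ≤ bin n (1/2) j := bin_nonneg' n
  have h0e : ∀ i : Fin (n+1), 0 ≤ Se n α i := fun i => by
    unfold Se
    by_cases h : Even i.val
    · rw [if_pos h]; exact mul_nonneg hα.le (hbin0 _)
    · rw [if_neg h]
  have h1e : ∀ i : Fin (n+1), Se n α i ≤ 1 := fun i => by
    unfold Se
    by_cases h : Even i.val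
    · rw [if_pos h]; exact hle i.val (Nat.lt_succ_iff.mp i.isLt)
    · rw [if_neg h]; norm_num
  have h0o : ∀ i : Fin (n+1), 0 ≤ So n α i := fun i => by
    unfold So
    by_cases h : Even i.val
    · rw [if_pos h]
    · rw [if_neg h]; exact mul_nonneg hα.le (hbin0 _)
  have h1o : ∀ i : Fin (n+1), So n α i ≤ 1 := fun i => by
    unfold So
    by_cases h : Even i.val
    · rw [if_pos h]; norm_num
    · rw [if_neg h]; exact hle i.val (Nat.lt_succ_iff.mp i.isLt)
  have hsqe : ∑ i, Real.sqrt (Se n α i) ≤ Real.sqrt α * (2*Real.pi*(n:ℝ))^((1:ℝ)/4) := by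
    apply sum_sqrt_S_le n hn α hα 0 (by norm_num)
    intro i
    unfold Se
    by_cases h : Even i.val
    · rw [if_pos h, if_pos (Nat.even_iff.mp h)]
    · rw [if_neg h, if_neg (by rw [Nat.even_iff] at h; omega)]
  have hsqo : ∑ i, Real.sqrt (So n α i) ≤ Real.sqrt α * (2*Real.pi*(n:ℝ))^((1:ℝ)/4) := by
    apply sum_sqrt_S_le n hn α hα 1 (by norm_num)
    intro i
    unfold So
    by_cases h : Even i.val
    · rw [if_pos h, if_neg (by rw [Nat.even_iff] at h; omega)]
    · rw [if_neg h, if_pos (by rw [Nat.even_iff] at h; omega)]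
  have he := both_bounds n hn α (Se n α) h0e h1e hsqe
  have ho := both_bounds n hn α (So n α) h0o h1o hsqo
  exact ⟨he.1, he.2, ho.1, ho.2⟩
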